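/- Every approval-based counting rule satisfies strong support monotonicity with population increase: if W is a winning committee for election E that contains a set G of candidates, then W remains a winning committee after adding a new voter whose ballot is exactly G. -/
import Mathlib


open Finset

variable {C : Type*} [Fintype C] [DecidableEq C]

/-- Total score of committee `W` under counting function `f` and approval profile `A`. -/
def countScore {V : Type*} [Fintype V] (f : ℕ → ℕ → ℝ) (A : V → Finset C)
    (W : Finset C) : ℝ :=
  ∑ i, f ((A i ∩ W).card) ((A i).card)

/-- `W` is a winning committee of the counting rule `r_f` for the election `(A, k)`. -/
def isCountWinner {V : Type*} [Fintype V] (f : ℕ → ℕ → ℝ) (A : V → Finset C) (k : ℕ)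
    (W : Finset C) : Prop :=
  W.card = k ∧ ∀ W' : Finset C, W'.card = k → countScore f A W' ≤ countScore f A W

/-- Every counting rule satisfies strong support monotonicity with population increase:
if `W` is winning for `(A, k)` and `G ⊆ W`, then `W` is still winning after adding a
new voter (the `none` voter) whose ballot is exactly `G`. -/
theorem counting_rule_strong_SMWPI {V : Type*} [Fintype V]
    (f : ℕ → ℕ → ℝ) (hf : ∀ x x' y, x' ≤ x → f x' y ≤ f x y)
    (A : V → Finset C) (k : ℕ) (hk : 1 ≤ k) (hkC : k ≤ Fintype.card C)
    (G : Finset C) (hG : G.Nonempty) (hGk : G.card ≤ k)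
    (W : Finset C) (hW : isCountWinner f A k W) (hGW : G ⊆ W) :
    isCountWinner f (fun v : Option V => v.elim G A) k W := by
  obtain ⟨hWk, hWmax⟩ := hW
  refine ⟨hWk, fun W' hW' => ?_⟩
  have key : ∀ X : Finset C, countScore f (fun v : Option V => v.elim G A) X
      = f ((G ∩ X).card) G.card + countScore f A X := by
    intro X
    simp [countScore, Fintype.sum_option]
  rw [key, key]
  have h1 : f ((G ∩ W').card) G.card ≤ f ((G ∩ W).card) G.card := by
    apply hf
    rw [Finset.inter_eq_left.mpr hGW]
    exact Finset.card_le_card (Finset.inter_subset_left)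
  exact add_le_add h1 (hWmax W' hW')
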